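/- arXiv:1703.07863 — 2 statements merged into one kernel-verified Lean document; each statement's English description precedes it below -/
import Mathlib

section
/- Let $d \ge 2$ be an integer, $0 < C_+ \le C_-$, $A_+, B_+ > 0$, and $V_\infty > 0$. There exist constants $\gamma_0 > 0$, $c_0 > 0$, and $\bar{t} > 0$, depending only on $d, C_+, C_-, A_+, B_+, V_\infty$, with the following property. Let $\gamma \in (0, \gamma_0]$, let $L \ge 1$ satisfy $L^{-(d-1)} \le c_0 \gamma$, set $V_0 = V_\infty - \gamma$ (assumed positive), and let $V : [0,\infty) \to \mathbb{R}$ be continuous with $V(0) = V_0$, $V(s) > V_0$ for all $s > 0$, and $\gamma e^{-C_- s} \le V_\infty - V(s) \le \gamma e^{-C_+ s} + \gamma^3 \frac{A_+}{(1+s)^{d+2}} + L^{-(d-1)} \frac{B_+}{(1+s/L)^{d-1}}$ for all $s \ge 0$. Then for every $t \ge \bar{t}/2$ the set $\{ s \in (0, t) : V(s) \ge (V_0 + \langle V \rangle_{s,t})/2 \}$ has a minimum $s_0 = s_0(t)$, and $\frac{1}{C_-} \log \frac{3}{2} \le s_0 \le \frac{1}{C_+} \log 4$. -/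
open MeasureTheory Real

/-- Time average `⟨V⟩_{s,t} = (t-s)⁻¹ ∫_s^t V(σ) dσ`. -/
noncomputable def avg (V : ℝ → ℝ) (s t : ℝ) : ℝ :=
  (t - s)⁻¹ * ∫ σ in s..t, V σ

set_option maxHeartbeats 1600000 in
/-- Claim (i) of Appendix A.3: for `t ≥ t̄/2`, the first time `s₀ = s₀(t)` at which
the velocity exceeds the midpoint `(V₀ + ⟨V⟩_{s,t})/2` exists (the set has a minimum)
and satisfies `C₋⁻¹ log(3/2) ≤ s₀ ≤ C₊⁻¹ log 4`. -/
theorem s0_exists_and_bounds (d : ℕ) (hd : 2 ≤ d)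
    (Cp Cm A B Vinf : ℝ) (hCp : 0 < Cp) (hCpm : Cp ≤ Cm)
    (hA : 0 < A) (hB : 0 < B) (hVinf : 0 < Vinf) :
    ∃ γ₀ c₀ tbar : ℝ, 0 < γ₀ ∧ 0 < c₀ ∧ 0 < tbar ∧
      ∀ γ : ℝ, 0 < γ → γ ≤ γ₀ →
        ∀ L : ℝ, 1 ≤ L → (L ^ (d - 1) : ℝ)⁻¹ ≤ c₀ * γ →
          0 < Vinf - γ →
          ∀ V : ℝ → ℝ, ContinuousOn V (Set.Ici 0) → V 0 = Vinf - γ →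
            (∀ s : ℝ, 0 < s → Vinf - γ < V s) →
            (∀ s : ℝ, 0 ≤ s →
              γ * Real.exp (-Cm * s) ≤ Vinf - V s ∧
              Vinf - V s ≤ γ * Real.exp (-Cp * s) + γ ^ 3 * (A / (1 + s) ^ (d + 2)) +
                B / (L ^ (d - 1) * (1 + s / L) ^ (d - 1))) →
            ∀ t : ℝ, tbar / 2 ≤ t →
              ∃ s₀ : ℝ,
                s₀ ∈ {s : ℝ | s ∈ Set.Ioo 0 t ∧ (Vinf - γ + avg V s t) / 2 ≤ V s} ∧
                (∀ s ∈ {s : ℝ | s ∈ Set.Ioo 0 t ∧ (Vinf - γ + avg V s t) / 2 ≤ V s},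
                  s₀ ≤ s) ∧
                Real.log (3 / 2) / Cm ≤ s₀ ∧ s₀ ≤ Real.log 4 / Cp := by
  have hCm : 0 < Cm := lt_of_lt_of_le hCp hCpm
  have hlog32 : 0 < Real.log (3 / 2) := Real.log_pos (by norm_num)
  have hlog4 : 0 < Real.log 4 := Real.log_pos (by norm_num)
  set a : ℝ := Real.log (3 / 2) / Cm with ha_def
  set b : ℝ := Real.log 4 / Cp with hb_def
  have ha : 0 < a := div_pos hlog32 hCm
  have hb : 0 < b := div_pos hlog4 hCp
  have hab : a ≤ b :=
    div_le_div₀ hlog4.le (Real.log_le_log (by norm_num) (by norm_num)) hCp hCpm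
  have hsqrtA : 0 < Real.sqrt (9 * A) := Real.sqrt_pos.mpr (by positivity)
  refine ⟨(Real.sqrt (9 * A))⁻¹, (9 * B)⁻¹, 2 * (b + 9 / Cp + 1), inv_pos.mpr hsqrtA,
    inv_pos.mpr (by positivity), by positivity, ?_⟩
  intro γ hγ hγ0 L hL hLc hVγ V hVcont hV0 hVgt hVbd t ht
  have ht' : b + 9 / Cp + 1 ≤ t := by linarith
  have h9Cp : 0 < 9 / Cp := by positivity
  have hbt : b < t := by linarith
  have ht0 : (0 : ℝ) ≤ t := by linarith [ha, hab]
  -- integrability of V on subintervals of [0, ∞)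
  have hVint : ∀ s u : ℝ, 0 ≤ s → s ≤ u → IntervalIntegrable V volume s u := by
    intro s u hs hsu
    refine (hVcont.mono ?_).intervalIntegrable
    rw [Set.uIcc_of_le hsu]
    exact fun x hx => le_trans hs hx.1
  -- pointwise upper bound on the drag D(s) = Vinf - V s
  have hUB : ∀ s : ℝ, 0 ≤ s → Vinf - V s ≤ γ * Real.exp (-Cp * s) + 2 * γ / 9 := by
    intro s hs
    obtain ⟨-, h2⟩ := hVbd s hs
    have hpow1 : (1 : ℝ) ≤ (1 + s) ^ (d + 2) := one_le_pow₀ (by linarith)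
    have e1 : γ ^ 3 * (A / (1 + s) ^ (d + 2)) ≤ γ / 9 := by
      have h1 : A / (1 + s) ^ (d + 2) ≤ A := div_le_self hA.le hpow1
      have h2' : γ ^ 3 * (A / (1 + s) ^ (d + 2)) ≤ γ ^ 3 * A :=
        mul_le_mul_of_nonneg_left h1 (by positivity)
      have hγsq : γ ^ 2 * (9 * A) ≤ 1 := by
        have h3 : γ ^ 2 ≤ ((Real.sqrt (9 * A))⁻¹) ^ 2 := by
          have := pow_le_pow_left₀ hγ.le hγ0 2
          simpa using this
        have h4 : ((Real.sqrt (9 * A))⁻¹) ^ 2 * (9 * A) = 1 := by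
          rw [inv_pow, Real.sq_sqrt (by positivity : (0:ℝ) ≤ 9 * A)]
          field_simp
        nlinarith [h3, h4, mul_le_mul_of_nonneg_right h3 (by positivity : (0:ℝ) ≤ 9 * A)]
      nlinarith [mul_le_mul_of_nonneg_left hγsq hγ.le]
    have e2 : B / (L ^ (d - 1) * (1 + s / L) ^ (d - 1)) ≤ γ / 9 := by
      have hL0 : (0 : ℝ) < L := lt_of_lt_of_le one_pos hL
      have hp1 : (0 : ℝ) < L ^ (d - 1) := pow_pos hL0 _
      have hp2 : (1 : ℝ) ≤ (1 + s / L) ^ (d - 1) :=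
        one_le_pow₀ (by linarith [div_nonneg hs hL0.le])
      have h5 : L ^ (d - 1) ≤ L ^ (d - 1) * (1 + s / L) ^ (d - 1) :=
        le_mul_of_one_le_right hp1.le hp2
      have h6 : B / (L ^ (d - 1) * (1 + s / L) ^ (d - 1)) ≤ B / L ^ (d - 1) :=
        div_le_div_of_nonneg_left hB.le hp1 h5
      have h7 : B / L ^ (d - 1) ≤ B * ((9 * B)⁻¹ * γ) := by
        rw [div_eq_mul_inv]
        exact mul_le_mul_of_nonneg_left hLc hB.le
      have h8 : B * ((9 * B)⁻¹ * γ) = γ / 9 := by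
        field_simp
      linarith
    linarith
  -- nonnegativity of D
  have hDpos : ∀ σ : ℝ, 0 ≤ σ → 0 ≤ Vinf - V σ := fun σ hσ =>
    le_trans (by positivity) (hVbd σ hσ).1
  -- integral bounds on J s = ∫_s^t D
  have hJnn : ∀ s : ℝ, 0 ≤ s → s ≤ t → 0 ≤ ∫ σ in s..t, (Vinf - V σ) := by
    intro s hs hst
    exact intervalIntegral.integral_nonneg hst (fun σ hσ => hDpos σ (le_trans hs hσ.1))
  have hJub : ∀ s : ℝ, 0 ≤ s → s ≤ b → (∫ σ in s..t, (Vinf - V σ)) ≤ γ / 3 * (t - s) := by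
    intro s hs hsb
    have hst : s ≤ t := le_trans hsb hbt.le
    have hint1 : IntervalIntegrable (fun σ => Vinf - V σ) volume s t :=
      intervalIntegrable_const.sub (hVint s t hs hst)
    have hcont2 : Continuous (fun σ : ℝ => γ * Real.exp (-Cp * σ) + 2 * γ / 9) := by
      continuity
    have hint2 : IntervalIntegrable (fun σ => γ * Real.exp (-Cp * σ) + 2 * γ / 9) volume s t :=
      hcont2.intervalIntegrable s t
    have hmono := intervalIntegral.integral_mono_on hst hint1 hint2
      (fun σ hσ => hUB σ (le_trans hs hσ.1))
    have hexp : (∫ σ in s..t, Real.exp (-Cp * σ)) =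
        (Real.exp (-Cp * s) - Real.exp (-Cp * t)) / Cp := by
      rw [intervalIntegral.integral_comp_mul_left (fun x => Real.exp x)
        (by linarith : -Cp ≠ 0), integral_exp, smul_eq_mul]
      field_simp [hCp.ne']
      ring
    have hintexp : IntervalIntegrable (fun σ : ℝ => γ * Real.exp (-Cp * σ)) volume s t := by
      apply Continuous.intervalIntegrable
      continuity
    have hcalc : (∫ σ in s..t, (γ * Real.exp (-Cp * σ) + 2 * γ / 9)) =
        γ * ((Real.exp (-Cp * s) - Real.exp (-Cp * t)) / Cp) + 2 * γ / 9 * (t - s) := by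
      rw [intervalIntegral.integral_add hintexp intervalIntegrable_const,
        intervalIntegral.integral_const_mul, hexp, intervalIntegral.integral_const,
        smul_eq_mul]
      ring
    have hexple : Real.exp (-Cp * s) ≤ 1 := Real.exp_le_one_iff.mpr (by nlinarith)
    have hexppos : 0 < Real.exp (-Cp * t) := Real.exp_pos _
    have hnum : (Real.exp (-Cp * s) - Real.exp (-Cp * t)) / Cp ≤ 1 / Cp := by
      gcongr
      linarith
    have hfrac : 1 / Cp ≤ (t - s) / 9 := by
      rw [div_le_div_iff₀ hCp (by norm_num : (0:ℝ) < 9)]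
      have h9' : 9 / Cp ≤ t - s := by linarith
      have h10 : 9 / Cp * Cp = 9 := div_mul_cancel₀ 9 hCp.ne'
      have h11 := mul_le_mul_of_nonneg_right h9' hCp.le
      linarith
    have h1 : γ * ((Real.exp (-Cp * s) - Real.exp (-Cp * t)) / Cp) ≤ γ * ((t - s) / 9) :=
      mul_le_mul_of_nonneg_left (le_trans hnum hfrac) hγ.le
    have h2 : γ * ((t - s) / 9) + 2 * γ / 9 * (t - s) = γ / 3 * (t - s) := by ring
    linarith [hmono, hcalc ▸ hmono]
  -- reformulation of the midpoint condition
  have hcond : ∀ s : ℝ, 0 < s → s < t →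
      (((Vinf - γ + avg V s t) / 2 ≤ V s) ↔
        2 * (t - s) * (Vinf - V s) ≤ γ * (t - s) + ∫ σ in s..t, (Vinf - V σ)) := by
    intro s hs hst
    have hτ : 0 < t - s := by linarith
    have hI : (∫ σ in s..t, (Vinf - V σ)) = Vinf * (t - s) - ∫ σ in s..t, V σ := by
      rw [intervalIntegral.integral_sub intervalIntegrable_const (hVint s t hs.le hst.le),
        intervalIntegral.integral_const, smul_eq_mul]
      ring
    rw [avg, hI]
    set I := ∫ σ in s..t, V σ with hI_def
    constructor
    · intro h
      have h' : (t - s)⁻¹ * I ≤ 2 * V s - Vinf + γ := by linarith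
      rw [inv_mul_le_iff₀ hτ] at h'
      nlinarith [h']
    · intro h
      have h' : I ≤ (t - s) * (2 * V s - Vinf + γ) := by nlinarith [h]
      rw [← inv_mul_le_iff₀ hτ] at h'
      linarith
  -- b belongs to the set
  have hexpb : Real.exp (-Cp * b) = 1 / 4 := by
    have : -Cp * b = -Real.log 4 := by
      rw [hb_def]
      field_simp
    rw [this, Real.exp_neg, Real.exp_log (by norm_num : (0:ℝ) < 4)]
    norm_num
  have hDb : Vinf - V b ≤ γ / 4 + 2 * γ / 9 := by
    have := hUB b hb.le
    rw [hexpb] at this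
    linarith
  have hmemb : (Vinf - γ + avg V b t) / 2 ≤ V b := by
    rw [hcond b hb hbt]
    have hJ := hJnn b hb.le hbt.le
    have hτ : 0 < t - b := by linarith
    nlinarith [mul_le_mul_of_nonneg_left hDb (by linarith : (0:ℝ) ≤ 2 * (t - b))]
  -- every element of the set is ≥ a
  have hlb : ∀ s : ℝ, 0 < s → s < t → (Vinf - γ + avg V s t) / 2 ≤ V s → a ≤ s := by
    intro s hs hst hcnd
    by_contra hlt
    push_neg at hlt
    have hτ : 0 < t - s := by linarith
    have h1 : Cm * s < Real.log (3 / 2) := by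
      have := (lt_div_iff₀ hCm).mp hlt
      linarith
    have h2 : (2 : ℝ) / 3 < Real.exp (-Cm * s) := by
      have : Real.exp (-Real.log (3 / 2)) < Real.exp (-Cm * s) :=
        Real.exp_lt_exp.mpr (by linarith)
      rw [Real.exp_neg, Real.exp_log (by norm_num : (0:ℝ) < 3 / 2)] at this
      norm_num at this
      rw [neg_mul]
      linarith
    have hD : 2 * γ / 3 < Vinf - V s :=
      lt_of_lt_of_le (by nlinarith) (hVbd s hs.le).1
    have hJ := hJub s hs.le (le_trans hlt.le hab)
    have hc2 := (hcond s hs hst).mp hcnd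
    nlinarith [mul_pos hτ (by linarith : 0 < (Vinf - V s) - 2 * γ / 3)]
  -- the compact set S' and its least element
  have hVcontab : ContinuousOn V (Set.Icc a b) :=
    hVcont.mono (fun x hx => le_trans ha.le hx.1)
  have hVio : IntegrableOn V (Set.uIcc 0 t) := by
    rw [Set.uIcc_of_le ht0]
    exact (hVcont.mono (fun x hx => hx.1)).integrableOn_Icc
  have hprim : ContinuousOn (fun s => ∫ σ in (0:ℝ)..s, V σ) (Set.Icc a b) := by
    refine (intervalIntegral.continuousOn_primitive_interval hVio).mono ?_
    rw [Set.uIcc_of_le ht0]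
    exact fun x hx => ⟨le_trans ha.le hx.1, le_trans hx.2 hbt.le⟩
  have hIs : ∀ s ∈ Set.Icc a b,
      (∫ σ in s..t, V σ) = (∫ σ in (0:ℝ)..t, V σ) - ∫ σ in (0:ℝ)..s, V σ := by
    intro s hs
    exact (intervalIntegral.integral_interval_sub_left (hVint 0 t le_rfl ht0)
      (hVint 0 s le_rfl (le_trans ha.le hs.1))).symm
  have havgcont : ContinuousOn (fun s => avg V s t) (Set.Icc a b) := by
    have h1 : ContinuousOn
        (fun s => (t - s)⁻¹ * ((∫ σ in (0:ℝ)..t, V σ) - ∫ σ in (0:ℝ)..s, V σ))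
        (Set.Icc a b) := by
      refine ContinuousOn.mul (ContinuousOn.inv₀
        ((continuous_const.sub continuous_id).continuousOn) ?_)
        (continuousOn_const.sub hprim)
      intro x hx
      have : x < t := lt_of_le_of_lt hx.2 hbt
      intro hcontra
      linarith [sub_eq_zero.mp hcontra]
    refine ContinuousOn.congr h1 ?_
    intro s hs
    simp only [avg]
    rw [hIs s hs]
  have hgcont : ContinuousOn (fun s => (Vinf - γ + avg V s t) / 2 - V s) (Set.Icc a b) :=
    ((continuousOn_const.add havgcont).div_const 2).sub hVcontab
  have hclosed : IsClosed (Set.Icc a b ∩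
      (fun s => (Vinf - γ + avg V s t) / 2 - V s) ⁻¹' Set.Iic 0) :=
    hgcont.preimage_isClosed_of_isClosed isClosed_Icc isClosed_Iic
  have hcpt : IsCompact (Set.Icc a b ∩
      (fun s => (Vinf - γ + avg V s t) / 2 - V s) ⁻¹' Set.Iic 0) :=
    IsCompact.of_isClosed_subset isCompact_Icc hclosed Set.inter_subset_left
  have hbS' : b ∈ Set.Icc a b ∩
      (fun s => (Vinf - γ + avg V s t) / 2 - V s) ⁻¹' Set.Iic 0 := by
    refine ⟨⟨hab, le_rfl⟩, ?_⟩
    simp only [Set.mem_preimage, Set.mem_Iic]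
    linarith
  obtain ⟨m, hmS, hmle⟩ := hcpt.exists_isLeast ⟨b, hbS'⟩
  obtain ⟨⟨hma, hmb⟩, hmg⟩ := hmS
  simp only [Set.mem_preimage, Set.mem_Iic] at hmg
  have hmg' : (Vinf - γ + avg V m t) / 2 ≤ V m := by linarith
  refine ⟨m, ⟨⟨lt_of_lt_of_le ha hma, lt_of_le_of_lt hmb hbt⟩, hmg'⟩, ?_, hma, hmb⟩
  intro s hsmem
  obtain ⟨⟨hs0, hst⟩, hsineq⟩ := hsmem
  by_cases hsb : s ≤ b
  · exact hmle ⟨⟨hlb s hs0 hst hsineq, hsb⟩, by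
      simp only [Set.mem_preimage, Set.mem_Iic]; linarith⟩
  · push_neg at hsb
    linarith
end

section
/- Let $d \ge 2$ be an integer, $0 < C_+ \le C_-$, $A_+, B_+ > 0$, and $V_\infty > 0$. There exist constants $\gamma_0 > 0$, $c_0 > 0$, $\bar{t} > 0$, $\bar{c} > 0$, and $C_* > 0$, depending only on $d, C_+, C_-, A_+, B_+, V_\infty$, with the following property. Let $\gamma \in (0, \gamma_0]$, let $L \ge 1$ satisfy $L^{-(d-1)} \le c_0 \gamma$, set $V_0 = V_\infty - \gamma$ (assumed positive), and let $V : [0,\infty) \to \mathbb{R}$ be continuous with $V(0) = V_0$, $V(s) > V_0$ for all $s > 0$, and $\gamma e^{-C_- s} \le V_\infty - V(s) \le \gamma e^{-C_+ s} + \gamma^3 \frac{A_+}{(1+s)^{d+2}} + L^{-(d-1)} \frac{B_+}{(1+s/L)^{d-1}}$ for all $s \ge 0$. Then for every $t$ with $\bar{t}/2 \le t < \bar{c} \gamma L^{d-1}$ and every $s \in (0, s_0(t)]$: $V(t) - \langle V \rangle_{s,t} \ge C_* \frac{\gamma}{t}$. -/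
open MeasureTheory Real

lemma integral_exp_neg_mul_aux (c a b : ℝ) (hc : c ≠ 0) :
    ∫ x in a..b, Real.exp (-c * x) = (Real.exp (-c * a) - Real.exp (-c * b)) / c := by
  have h : (-c) ≠ 0 := neg_ne_zero.mpr hc
  rw [intervalIntegral.integral_comp_mul_left Real.exp h, integral_exp, smul_eq_mul]
  field_simp
  ring

set_option maxHeartbeats 1600000

/-- Claim (iv) of Appendix A.3: for `t̄/2 ≤ t < c̄ γ L^{d-1}` and `0 < s ≤ s₀(t)`
(where `s₀(t)` is the minimum of `{s ∈ (0,t) : V(s) ≥ (V₀ + ⟨V⟩_{s,t})/2}`),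
one has `V(t) - ⟨V⟩_{s,t} ≥ C_* γ / t`. -/
theorem velocity_minus_average_lower_bound (d : ℕ) (hd : 2 ≤ d)
    (Cp Cm A B Vinf : ℝ) (hCp : 0 < Cp) (hCpm : Cp ≤ Cm)
    (hA : 0 < A) (hB : 0 < B) (hVinf : 0 < Vinf) :
    ∃ γ₀ c₀ tbar cbar Cstar : ℝ,
      0 < γ₀ ∧ 0 < c₀ ∧ 0 < tbar ∧ 0 < cbar ∧ 0 < Cstar ∧
      ∀ γ : ℝ, 0 < γ → γ ≤ γ₀ →
        ∀ L : ℝ, 1 ≤ L → (L ^ (d - 1) : ℝ)⁻¹ ≤ c₀ * γ →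
          0 < Vinf - γ →
          ∀ V : ℝ → ℝ, ContinuousOn V (Set.Ici 0) → V 0 = Vinf - γ →
            (∀ s : ℝ, 0 < s → Vinf - γ < V s) →
            (∀ s : ℝ, 0 ≤ s →
              γ * Real.exp (-Cm * s) ≤ Vinf - V s ∧
              Vinf - V s ≤ γ * Real.exp (-Cp * s) + γ ^ 3 * (A / (1 + s) ^ (d + 2)) +
                B / (L ^ (d - 1) * (1 + s / L) ^ (d - 1))) →
            ∀ t : ℝ, tbar / 2 ≤ t → t < cbar * γ * L ^ (d - 1) →
              ∀ s₀ : ℝ,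
                (s₀ ∈ {s : ℝ | s ∈ Set.Ioo 0 t ∧ (Vinf - γ + avg V s t) / 2 ≤ V s} ∧
                  ∀ s ∈ {s : ℝ | s ∈ Set.Ioo 0 t ∧ (Vinf - γ + avg V s t) / 2 ≤ V s},
                    s₀ ≤ s) →
                ∀ s : ℝ, 0 < s → s ≤ s₀ →
                  Cstar * γ / t ≤ V t - avg V s t := by
  have hCm : 0 < Cm := lt_of_lt_of_le hCp hCpm
  obtain ⟨S, hS_def⟩ : ∃ x : ℝ, x = Real.log 4 / Cp := ⟨_, rfl⟩
  have hS0 : 0 < S := by rw [hS_def]; exact div_pos (Real.log_pos (by norm_num)) hCp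
  obtain ⟨E, hE_def⟩ : ∃ x : ℝ, x = Real.exp (-(Cm * S)) := ⟨_, rfl⟩
  have hE0 : 0 < E := by rw [hE_def]; exact Real.exp_pos _
  obtain ⟨c₁, hc₁_def⟩ : ∃ x : ℝ, x = E / (2 * Cm) := ⟨_, rfl⟩
  have hc₁0 : 0 < c₁ := by rw [hc₁_def]; exact div_pos hE0 (by linarith)
  have hlog2 : (0:ℝ) ≤ Real.log 2 / Cm := div_nonneg (Real.log_nonneg (by norm_num)) hCm.le
  have h48 : (0:ℝ) < 48 / (Cp ^ 2 * c₁) :=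
    div_pos (by norm_num) (mul_pos (pow_pos hCp 2) hc₁0)
  refine ⟨min 1 (min (1/8) (c₁/6) / (1 + A)), 1/(8*B),
    2 * (S + Real.log 2 / Cm + 1 + 48/(Cp^2 * c₁)), c₁/(6*B), c₁/2,
    ?_, by positivity, by linarith, div_pos hc₁0 (by positivity), half_pos hc₁0, ?_⟩
  · have h : (0:ℝ) < min (1/8) (c₁/6) / (1 + A) :=
      div_pos (lt_min (by norm_num) (by linarith)) (by linarith)
    exact lt_min one_pos h
  intro γ hγ hγ0 L hL hLc hVγ V hVcont hV0 hVgt hest t ht1 ht2 s₀ hs₀ s hs hss₀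
  obtain ⟨⟨⟨hs₀0, hs₀t⟩, _⟩, hs₀min⟩ := hs₀
  have hγ1 : γ ≤ 1 := hγ0.trans (min_le_left _ _)
  have hγA : γ * (1 + A) ≤ min (1/8) (c₁/6) := by
    have h1 : γ ≤ min (1/8) (c₁/6) / (1 + A) := hγ0.trans (min_le_right _ _)
    rwa [le_div_iff₀ (by linarith)] at h1
  have hexpand : γ * (1 + A) = γ + γ * A := by ring
  have hγA8 : γ * A ≤ 1/8 := by
    have := min_le_left (1/8 : ℝ) (c₁/6); linarith
  have hγAc : γ * A ≤ c₁/6 := by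
    have := min_le_right (1/8 : ℝ) (c₁/6); linarith
  have hγsq : γ ^ 2 ≤ γ := by
    have h := mul_le_mul_of_nonneg_left hγ1 hγ.le
    linarith only [h]
  have hL0 : (0:ℝ) < L := lt_of_lt_of_le one_pos hL
  have hLp : (0:ℝ) < L ^ (d-1) := by positivity
  have hBL : B * (L ^ (d-1) : ℝ)⁻¹ ≤ γ/8 := by
    have h := mul_le_mul_of_nonneg_left hLc hB.le
    have hBne : B ≠ 0 := hB.ne'
    calc B * (L ^ (d-1) : ℝ)⁻¹ ≤ B * (1/(8*B) * γ) := h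
      _ = γ/8 := by field_simp
  have ht0 : (0:ℝ) < t := by linarith
  have htS : S + Real.log 2 / Cm ≤ t := by linarith
  have hSt : S < t := by linarith
  have ht48 : 48/(Cp^2*c₁) ≤ t := by linarith
  have hs₀S : s₀ ≤ S := by
    apply hs₀min
    refine ⟨⟨hS0, hSt⟩, ?_⟩
    have hVSub := (hest S hS0.le).2
    have hexpS : Real.exp (-Cp * S) = 1/4 := by
      have h4 : -Cp * S = -Real.log 4 := by rw [hS_def]; field_simp
      rw [h4, Real.exp_neg, Real.exp_log (by norm_num)]
      norm_num
    have h1S : (1:ℝ) ≤ (1 + S) ^ (d+2) := one_le_pow₀ (by linarith)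
    have hA1 : A / (1 + S) ^ (d+2) ≤ A := div_le_self hA.le h1S
    have h2S : γ ^ 3 * (A / (1 + S) ^ (d+2)) ≤ γ/8 := by
      have h5 : γ^2*(γ*A) ≤ γ^2*(1/8) := mul_le_mul_of_nonneg_left hγA8 (sq_nonneg γ)
      have h6 : γ^2*(1/8) ≤ γ*(1/8) := mul_le_mul_of_nonneg_right hγsq (by norm_num)
      have h7 := mul_le_mul_of_nonneg_left hA1 (pow_nonneg hγ.le 3)
      linarith
    have h3S : B / (L ^ (d-1) * (1 + S/L) ^ (d-1)) ≤ γ/8 := by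
      have h1 : (1:ℝ) ≤ (1 + S/L) ^ (d-1) := one_le_pow₀
        (by linarith [div_nonneg hS0.le hL0.le])
      calc B / (L ^ (d-1) * (1 + S/L) ^ (d-1)) ≤ B / L ^ (d-1) :=
            div_le_div_of_nonneg_left hB.le hLp (le_mul_of_one_le_right hLp.le h1)
        _ = B * (L ^ (d-1) : ℝ)⁻¹ := by rw [div_eq_mul_inv]
        _ ≤ γ/8 := hBL
    have hVS : Vinf - γ/2 ≤ V S := by
      rw [hexpS] at hVSub; linarith
    have hVint : IntervalIntegrable V volume S t := by
      apply ContinuousOn.intervalIntegrable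
      apply hVcont.mono
      rw [Set.uIcc_of_le hSt.le]
      exact fun x hx => le_trans hS0.le hx.1
    have havg : avg V S t ≤ Vinf := by
      have hmono : (∫ σ in S..t, V σ) ≤ ∫ σ in S..t, Vinf := by
        apply intervalIntegral.integral_mono_on hSt.le hVint intervalIntegrable_const
        intro x hx
        have h := (hest x (le_trans hS0.le hx.1)).1
        have hp : (0:ℝ) < γ * Real.exp (-Cm * x) := by positivity
        linarith
      rw [intervalIntegral.integral_const, smul_eq_mul] at hmono
      rw [avg, inv_mul_le_iff₀ (by linarith)]
      linarith
    linarith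
  have hsS : s ≤ S := hss₀.trans hs₀S
  have hst : s < t := lt_of_le_of_lt hsS hSt
  -- quantitative average lower bound on [s,t]
  have hVint : IntervalIntegrable V volume s t := by
    apply ContinuousOn.intervalIntegrable
    apply hVcont.mono
    rw [Set.uIcc_of_le hst.le]
    exact fun x hx => le_trans hs.le hx.1
  have hexp_int : IntervalIntegrable (fun σ => γ * Real.exp (-Cm * σ)) volume s t := by
    exact (continuous_const.mul (Real.continuous_exp.comp
      (continuous_const.mul continuous_id))).intervalIntegrable _ _
  have hsub_int : IntervalIntegrable (fun σ => Vinf - V σ) volume s t :=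
    intervalIntegrable_const.sub hVint
  have hmono : (∫ σ in s..t, γ * Real.exp (-Cm * σ)) ≤ ∫ σ in s..t, (Vinf - V σ) := by
    apply intervalIntegral.integral_mono_on hst.le hexp_int hsub_int
    exact fun x hx => (hest x (le_trans hs.le hx.1)).1
  have hcomp : (∫ σ in s..t, γ * Real.exp (-Cm * σ))
      = γ * ((Real.exp (-Cm * s) - Real.exp (-Cm * t)) / Cm) := by
    rw [intervalIntegral.integral_const_mul, integral_exp_neg_mul_aux Cm s t hCm.ne']
  have havg_eq : Vinf - avg V s t = (t - s)⁻¹ * ∫ σ in s..t, (Vinf - V σ) := by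
    rw [intervalIntegral.integral_sub intervalIntegrable_const hVint,
      intervalIntegral.integral_const, smul_eq_mul, avg]
    have hne : t - s ≠ 0 := by linarith
    field_simp
  have hes : E ≤ Real.exp (-Cm * s) := by
    rw [hE_def]
    apply Real.exp_le_exp.mpr
    have := mul_le_mul_of_nonneg_left hsS hCm.le
    linarith
  have het : Real.exp (-Cm * t) ≤ E / 2 := by
    have h2 : Real.exp (-Cm * t) ≤ Real.exp (-(Cm * S) - Real.log 2) := by
      apply Real.exp_le_exp.mpr
      have hCmS : Cm * (S + Real.log 2 / Cm) = Cm * S + Real.log 2 := by field_simp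
      have := mul_le_mul_of_nonneg_left htS hCm.le
      linarith
    have h3 : Real.exp (-(Cm * S) - Real.log 2) = E / 2 := by
      rw [Real.exp_sub, Real.exp_log (by norm_num), hE_def]
    linarith
  have hc₁le : c₁ ≤ (Real.exp (-Cm * s) - Real.exp (-Cm * t)) / Cm := by
    rw [hc₁_def]
    have hd2 : E/2 ≤ Real.exp (-Cm * s) - Real.exp (-Cm * t) := by linarith only [hes, het]
    calc E/(2*Cm) = (E/2)/Cm := by ring
      _ ≤ (Real.exp (-Cm * s) - Real.exp (-Cm * t))/Cm := (div_le_div_iff_of_pos_right hCm).mpr hd2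
  have hinv : t⁻¹ ≤ (t - s)⁻¹ := inv_anti₀ (by linarith) (by linarith)
  have hlow : γ * c₁ * t⁻¹ ≤ Vinf - avg V s t := by
    rw [havg_eq]
    have hb : 0 ≤ γ * ((Real.exp (-Cm * s) - Real.exp (-Cm * t)) / Cm) :=
      le_trans (mul_nonneg hγ.le hc₁0.le) (mul_le_mul_of_nonneg_left hc₁le hγ.le)
    calc γ * c₁ * t⁻¹
        ≤ γ * ((Real.exp (-Cm * s) - Real.exp (-Cm * t)) / Cm) * (t - s)⁻¹ :=
          mul_le_mul (mul_le_mul_of_nonneg_left hc₁le hγ.le) hinv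
            (inv_nonneg.mpr ht0.le) hb
      _ = (t - s)⁻¹ * (γ * ((Real.exp (-Cm * s) - Real.exp (-Cm * t)) / Cm)) := by ring
      _ ≤ (t - s)⁻¹ * ∫ σ in s..t, (Vinf - V σ) := by
          apply mul_le_mul_of_nonneg_left _ (inv_nonneg.mpr (by linarith))
          rw [← hcomp]; exact hmono
  -- upper bound on Vinf - V t
  have hVtub := (hest t ht0.le).2
  have h24 : (24:ℝ) ≤ Cp^2 * c₁ * t := by
    rw [div_le_iff₀ (mul_pos (pow_pos hCp 2) hc₁0)] at ht48
    linarith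
  have hexp_quad : Cp^2 * t^2 / 4 ≤ Real.exp (Cp * t) := by
    have h1 := Real.add_one_le_exp (Cp*t/2)
    have h2 : Real.exp (Cp*t) = Real.exp (Cp*t/2) * Real.exp (Cp*t/2) := by
      rw [← Real.exp_add]; ring_nf
    have hx : (0:ℝ) ≤ Cp*t/2 := by positivity
    have h3 : (Cp*t/2+1)*(Cp*t/2+1) ≤ Real.exp (Cp*t/2) * Real.exp (Cp*t/2) :=
      mul_le_mul h1 h1 (by linarith) (Real.exp_pos _).le
    linarith only [h2, h3, hx]
  have h1t : γ * Real.exp (-Cp * t) ≤ γ * (c₁/6) * t⁻¹ := by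
    have hneg : -Cp * t = -(Cp * t) := by ring
    have hie : Real.exp (-Cp * t) ≤ (Cp^2 * t^2 / 4)⁻¹ := by
      rw [hneg, Real.exp_neg]
      exact inv_anti₀ (by positivity) hexp_quad
    have hie2 : (Cp^2 * t^2 / 4)⁻¹ ≤ c₁/6 * t⁻¹ := by
      rw [inv_div, show c₁/6 * t⁻¹ = c₁/(6*t) by ring,
        div_le_div_iff₀ (by positivity) (by positivity)]
      have h := mul_nonneg (by linarith : (0:ℝ) ≤ Cp^2*c₁*t - 24) ht0.le
      linarith only [h]
    calc γ * Real.exp (-Cp * t) ≤ γ * (c₁/6 * t⁻¹) :=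
          mul_le_mul_of_nonneg_left (hie.trans hie2) hγ.le
      _ = γ * (c₁/6) * t⁻¹ := by ring
  have h2t : γ ^ 3 * (A / (1 + t) ^ (d + 2)) ≤ γ * (c₁/6) * t⁻¹ := by
    have hpow : t ≤ (1 + t) ^ (d + 2) :=
      le_trans (by linarith) (le_self_pow₀ (by linarith) (by omega))
    have hdiv : A / (1 + t) ^ (d + 2) ≤ A / t :=
      div_le_div_of_nonneg_left hA.le ht0 hpow
    have hg3 : γ ^ 3 * A ≤ γ * (c₁/6) := by
      have i1 : γ^2*(γ*A) ≤ γ^2*(c₁/6) := mul_le_mul_of_nonneg_left hγAc (sq_nonneg γ)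
      have i3 : γ^2*(c₁/6) ≤ γ*(c₁/6) := mul_le_mul_of_nonneg_right hγsq (by linarith)
      linarith
    calc γ ^ 3 * (A / (1 + t) ^ (d + 2)) ≤ γ ^ 3 * (A / t) :=
          mul_le_mul_of_nonneg_left hdiv (by positivity)
      _ = γ ^ 3 * A * t⁻¹ := by ring
      _ ≤ γ * (c₁/6) * t⁻¹ := mul_le_mul_of_nonneg_right hg3 (inv_nonneg.mpr ht0.le)
  have h3t : B / (L ^ (d-1) * (1 + t/L) ^ (d-1)) ≤ γ * (c₁/6) * t⁻¹ := by
    have h1 : (1:ℝ) ≤ (1 + t/L) ^ (d-1) := one_le_pow₀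
      (by linarith [div_nonneg ht0.le hL0.le])
    have h6B : 6*B*t < c₁*γ*L^(d-1) := by
      have h := mul_lt_mul_of_pos_left ht2 (show (0:ℝ) < 6*B by positivity)
      have he : 6*B*(c₁/(6*B)*γ*L^(d-1)) = c₁*γ*L^(d-1) := by field_simp
      linarith
    have hBLt : B / L^(d-1) ≤ γ * c₁/(6*t) := by
      rw [div_le_div_iff₀ hLp (by positivity)]
      linarith
    calc B / (L ^ (d-1) * (1 + t/L) ^ (d-1)) ≤ B / L ^ (d-1) :=
          div_le_div_of_nonneg_left hB.le hLp (le_mul_of_one_le_right hLp.le h1)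
      _ ≤ γ * c₁/(6*t) := hBLt
      _ = γ * (c₁/6) * t⁻¹ := by ring
  have e1 : γ * (c₁/6) * t⁻¹ = γ * c₁ * t⁻¹ / 6 := by ring
  have e2 : c₁/2 * γ / t = γ * c₁ * t⁻¹ / 2 := by ring
  have hup : Vinf - V t ≤ γ * c₁ * t⁻¹ / 2 := by linarith only [hVtub, h1t, h2t, h3t, e1]
  linarith only [hlow, hup, e2]
end
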